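/- Let (y_n)_{n≥0} be a sequence of points in [0,1) and (r_n)_{n≥0} a sequence of positive reals with r_n → 0 as n → ∞, and let B_n = {x ∈ ℝ : |x − y_n| < r_n}. Then the set K({B_n}) = {x ∈ [0,1) : T_b^n(x) ∉ B_n for all but finitely many n ≥ 0} has Hausdorff dimension 1. -/

import Mathlib

open MeasureTheory Filter

namespace Paper

open scoped NNReal ENNReal

/-- The expanding map `T_b : [0,1) → [0,1)`, `x ↦ bx (mod 1)`. -/
noncomputable def Tmap (b : ℕ) : ℝ → ℝ := fun x => Int.fract ((b : ℝ) * x)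

section Digits

variable (B : ℕ)

noncomputable def dig (x : ℝ) (j : ℕ) : ℤ := ⌊(B:ℝ)^(j+1) * x⌋ % (B:ℤ)

noncomputable def expand (c : ℕ → ℤ) : ℝ := ∑' j, (c j : ℝ) / (B:ℝ)^(j+1)

variable {B}

section
variable {c : ℕ → ℤ} {D : ℕ} (hc : ∀ j, 0 ≤ c j ∧ c j ≤ D)

lemma summable_geom_aux (hB : 2 ≤ B) :
    Summable (fun j : ℕ => (D:ℝ) * ((B:ℝ)⁻¹)^(j+1)) := by
  have hB1 : (1:ℝ) < B := by exact_mod_cast hB.trans_lt' one_lt_two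
  have hlt : (B:ℝ)⁻¹ < 1 := by rw [inv_lt_one_iff₀]; right; exact hB1
  have h0 : (0:ℝ) ≤ (B:ℝ)⁻¹ := by positivity
  have : (fun j : ℕ => (D:ℝ) * ((B:ℝ)⁻¹)^(j+1))
      = fun j : ℕ => ((D:ℝ) * (B:ℝ)⁻¹) * ((B:ℝ)⁻¹)^j := by funext j; ring
  rw [this]
  exact (summable_geometric_of_lt_one h0 hlt).mul_left _

lemma tsum_geom_aux (hB : 2 ≤ B) :
    ∑' j : ℕ, (D:ℝ) * ((B:ℝ)⁻¹)^(j+1) = (D:ℝ) / ((B:ℝ) - 1) := by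
  have hB1 : (1:ℝ) < B := by exact_mod_cast hB.trans_lt' one_lt_two
  have hlt : (B:ℝ)⁻¹ < 1 := by rw [inv_lt_one_iff₀]; right; exact hB1
  have h0 : (0:ℝ) ≤ (B:ℝ)⁻¹ := by positivity
  have : (fun j : ℕ => (D:ℝ) * ((B:ℝ)⁻¹)^(j+1))
      = fun j : ℕ => ((D:ℝ) * (B:ℝ)⁻¹) * ((B:ℝ)⁻¹)^j := by funext j; ring
  rw [this, tsum_mul_left, tsum_geometric_of_lt_one h0 hlt]
  have hB0 : (0:ℝ) < B := by linarith
  field_simp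

include hc in
lemma term_le (hB : 2 ≤ B) (j : ℕ) :
    (c j : ℝ) / (B:ℝ)^(j+1) ≤ (D:ℝ) * ((B:ℝ)⁻¹)^(j+1) := by
  have hB0 : (0:ℝ) < B := by positivity
  rw [div_eq_mul_inv, ← inv_pow]
  have h1 : (c j : ℝ) ≤ D := by exact_mod_cast (hc j).2
  have h2 : (0:ℝ) ≤ ((B:ℝ)⁻¹)^(j+1) := by positivity
  nlinarith

include hc in
lemma summable_expand (hB : 2 ≤ B) : Summable (fun j => (c j : ℝ) / (B:ℝ)^(j+1)) := by
  refine Summable.of_nonneg_of_le (fun j => ?_) (term_le hc hB) (summable_geom_aux hB)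
  have h : (0:ℝ) ≤ c j := by exact_mod_cast (hc j).1
  positivity

include hc in
lemma expand_nonneg : 0 ≤ expand B c := by
  apply tsum_nonneg; intro j
  have : (0:ℝ) ≤ c j := by exact_mod_cast (hc j).1
  positivity

include hc in
lemma expand_le (hB : 2 ≤ B) : expand B c ≤ (D : ℝ) / ((B:ℝ) - 1) := by
  rw [← tsum_geom_aux (D := D) hB]
  exact Summable.tsum_le_tsum (term_le hc hB) (summable_expand hc hB) (summable_geom_aux hB)

end

lemma floor_div_nat_int (t : ℝ) (m : ℕ) (hm : 0 < m) : ⌊t / (m:ℝ)⌋ = ⌊t⌋ / (m:ℤ) := by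
  have hm0 : (0:ℝ) < m := by exact_mod_cast hm
  set q := ⌊t⌋ / (m:ℤ) with hq
  set rem := ⌊t⌋ % (m:ℤ) with hrem
  have hdm : (m:ℤ) * q + rem = ⌊t⌋ := Int.mul_ediv_add_emod _ _
  have hr0 : 0 ≤ rem := Int.emod_nonneg _ (by positivity)
  have hr1 : rem < m := Int.emod_lt_of_pos _ (by positivity)
  have h2' : (m:ℝ) * (q:ℝ) + (rem:ℝ) = ((⌊t⌋:ℤ):ℝ) := by exact_mod_cast hdm
  have hr0' : (0:ℝ) ≤ (rem:ℝ) := by exact_mod_cast hr0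
  have hr1' : (rem:ℝ) < (m:ℝ) := by exact_mod_cast hr1
  rw [Int.floor_eq_iff]
  constructor
  · rw [le_div_iff₀ hm0]
    have h1 : ((⌊t⌋ : ℤ) : ℝ) ≤ t := Int.floor_le t
    nlinarith [mul_comm (q:ℝ) (m:ℝ)]
  · rw [div_lt_iff₀ hm0]
    have h1 : t < ((⌊t⌋ : ℤ) : ℝ) + 1 := Int.lt_floor_add_one t
    push_cast
    calc t < ((⌊t⌋:ℤ):ℝ) + 1 := h1
      _ = (m:ℝ)*(q:ℝ) + (rem:ℝ) + 1 := by rw [← h2']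
      _ ≤ (m:ℝ)*(q:ℝ) + (m:ℝ) := by
          have : (rem:ℝ) + 1 ≤ (m:ℝ) := by exact_mod_cast hr1
          linarith
      _ = ((q:ℝ)+1) * (m:ℝ) := by ring

section Digits2

variable {B : ℕ} (hB : 2 ≤ B) {c : ℕ → ℤ} (hc : ∀ j, 0 ≤ c j ∧ c j ≤ (B - 2 : ℕ))

include hB hc

lemma expand_lt_one : expand B c < 1 := by
  refine (expand_le hc hB).trans_lt ?_
  have hB1 : (1:ℝ) < B := by exact_mod_cast hB.trans_lt' one_lt_two
  rw [div_lt_one (by linarith)]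
  have : ((B - 2 : ℕ) : ℝ) = (B:ℝ) - 2 := by
    push_cast [Nat.cast_sub hB]; ring
  rw [this]; linarith

lemma floor_expand (J : ℕ) :
    ⌊(B:ℝ)^J * expand B c⌋ = ∑ j ∈ Finset.range J, c j * (B:ℤ)^(J-1-j) := by
  have hB0 : (0:ℝ) < B := by positivity
  have hsum := summable_expand hc hB
  have h1 : (∑ j ∈ Finset.range J, (c j:ℝ)/(B:ℝ)^(j+1))
      + ∑' i, (c (i+J):ℝ)/(B:ℝ)^(i+J+1) = expand B c := Summable.sum_add_tsum_nat_add J hsum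
  set T : ℝ := expand B (fun i => c (i+J)) with hT
  have hcs : ∀ j, 0 ≤ c (j+J) ∧ c (j+J) ≤ (B - 2 : ℕ) := fun j => hc (j+J)
  have hT0 : 0 ≤ T := expand_nonneg hcs
  have hT1 : T < 1 := expand_lt_one hB hcs
  have key : (B:ℝ)^J * expand B c
      = ((∑ j ∈ Finset.range J, c j * (B:ℤ)^(J-1-j) : ℤ) : ℝ) + T := by
    rw [← h1, mul_add]
    congr 1
    · rw [Finset.mul_sum]
      push_cast
      apply Finset.sum_congr rfl
      intro j hj
      have hjJ : j < J := Finset.mem_range.mp hj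
      have hpow : (B:ℝ)^J = (B:ℝ)^(J-1-j) * (B:ℝ)^(j+1) := by
        rw [← pow_add]; congr 1; omega
      rw [hpow]
      field_simp
    · rw [hT, expand, ← tsum_mul_left]
      apply tsum_congr
      intro i
      have hpow : (B:ℝ)^(i+J+1) = (B:ℝ)^J * (B:ℝ)^(i+1) := by
        rw [← pow_add]; congr 1; omega
      rw [hpow]
      field_simp
  rw [key, Int.floor_intCast_add]
  have : ⌊T⌋ = 0 := Int.floor_eq_zero_iff.mpr ⟨hT0, hT1⟩
  omega

lemma dig_expand (j : ℕ) : dig B (expand B c) j = c j := by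
  unfold dig
  rw [floor_expand hB hc (j+1), Finset.sum_range_succ]
  have h1 : ∑ i ∈ Finset.range j, c i * (B:ℤ)^(j+1-1-i)
      = (B:ℤ) * ∑ i ∈ Finset.range j, c i * (B:ℤ)^(j-1-i) := by
    rw [Finset.mul_sum]
    apply Finset.sum_congr rfl
    intro i hi
    have hij : i < j := Finset.mem_range.mp hi
    have he : j + 1 - 1 - i = (j - 1 - i) + 1 := by omega
    rw [he, pow_succ]; ring
  have h2 : j + 1 - 1 - j = 0 := by omega
  rw [h1, h2, pow_zero, mul_one, add_comm, Int.add_mul_emod_self_left]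
  have hcj := hc j
  have hB2 : ((B - 2:ℕ):ℤ) < B := by
    have : (2:ℤ) ≤ B := by exact_mod_cast hB
    omega
  exact Int.emod_eq_of_lt hcj.1 (by omega)

end Digits2

section Digits3

variable {B : ℕ} (hB : 2 ≤ B)

include hB in
lemma dig_nonneg (x : ℝ) (j : ℕ) : 0 ≤ dig B x j := by
  apply Int.emod_nonneg
  have : (2:ℤ) ≤ B := by exact_mod_cast hB
  omega

include hB in
lemma dig_lt (x : ℝ) (j : ℕ) : dig B x j < B := by
  apply Int.emod_lt_of_pos
  have : (2:ℤ) ≤ B := by exact_mod_cast hB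
  omega

include hB in
lemma dig_le (x : ℝ) (j : ℕ) : dig B x j ≤ (B - 1 : ℕ) := by
  have h1 := dig_lt hB x j
  have h2 : ((B-1:ℕ):ℤ) = (B:ℤ) - 1 := by
    push_cast [Nat.cast_sub (by omega : 1 ≤ B)]; ring
  omega

include hB in
lemma dig_bounds (x : ℝ) : ∀ j, 0 ≤ dig B x j ∧ dig B x j ≤ (B - 1 : ℕ) :=
  fun j => ⟨dig_nonneg hB x j, dig_le hB x j⟩

include hB in
lemma expand_dig (t : ℝ) (ht : t ∈ Set.Ico (0:ℝ) 1) : expand B (dig B t) = t := by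
  have hB0 : (0:ℝ) < B := by positivity
  have hB1 : (1:ℝ) < B := by exact_mod_cast hB.trans_lt' one_lt_two
  have hcb := dig_bounds hB t
  have hsum := summable_expand hcb hB
  have hstep : ∀ j : ℕ, dig B t j = ⌊(B:ℝ)^(j+1) * t⌋ - (B:ℤ) * ⌊(B:ℝ)^j * t⌋ := by
    intro j
    have hdiv : ⌊(B:ℝ)^j * t⌋ = ⌊(B:ℝ)^(j+1) * t⌋ / (B:ℤ) := by
      rw [← floor_div_nat_int ((B:ℝ)^(j+1) * t) B (by omega)]
      congr 1
      rw [pow_succ]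
      field_simp
    rw [dig, hdiv, Int.emod_def]
  have hpart : ∀ J : ℕ, ∑ j ∈ Finset.range J, (dig B t j : ℝ)/(B:ℝ)^(j+1)
      = (⌊(B:ℝ)^J * t⌋ : ℝ)/(B:ℝ)^J := by
    intro J
    induction J with
    | zero =>
      simp only [Finset.range_zero, Finset.sum_empty, pow_zero, one_mul]
      have h0 : ⌊t⌋ = 0 := Int.floor_eq_zero_iff.mpr ⟨ht.1, ht.2⟩
      simp [h0]
    | succ J ih =>
      rw [Finset.sum_range_succ, ih, hstep J]
      have hBJ : (0:ℝ) < (B:ℝ)^J := by positivity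
      push_cast
      rw [pow_succ]
      field_simp
      ring
  have hdist : ∀ J : ℕ, ‖(∑ j ∈ Finset.range J, (dig B t j : ℝ)/(B:ℝ)^(j+1)) - t‖
      ≤ ((B:ℝ)⁻¹)^J := by
    intro J
    rw [hpart J]
    have hBJ : (0:ℝ) < (B:ℝ)^J := by positivity
    have hf1 : ((⌊(B:ℝ)^J * t⌋ : ℤ) : ℝ) ≤ (B:ℝ)^J * t := Int.floor_le _
    have hf2 : (B:ℝ)^J * t < ((⌊(B:ℝ)^J * t⌋ : ℤ) : ℝ) + 1 := Int.lt_floor_add_one _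
    have e : (⌊(B:ℝ)^J * t⌋ : ℝ)/(B:ℝ)^J - t
        = (((⌊(B:ℝ)^J * t⌋:ℤ):ℝ) - (B:ℝ)^J * t)/(B:ℝ)^J := by field_simp
    have habs : |((⌊(B:ℝ)^J * t⌋:ℤ):ℝ) - (B:ℝ)^J * t| ≤ 1 := by
      rw [abs_le]; constructor <;> linarith
    rw [Real.norm_eq_abs, e, abs_div, abs_of_pos hBJ]
    calc |((⌊(B:ℝ)^J * t⌋:ℤ):ℝ) - (B:ℝ)^J * t| / (B:ℝ)^J ≤ 1 / (B:ℝ)^J := by gcongr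
      _ = ((B:ℝ)⁻¹)^J := by rw [one_div, inv_pow]
  have htend0 : Tendsto (fun J : ℕ => ((B:ℝ)⁻¹)^J) atTop (nhds 0) := by
    apply tendsto_pow_atTop_nhds_zero_of_lt_one (by positivity)
    rw [inv_lt_one_iff₀]; right; exact hB1
  have htend : Tendsto (fun J => ∑ j ∈ Finset.range J, (dig B t j : ℝ)/(B:ℝ)^(j+1))
      atTop (nhds t) := by
    rw [← tendsto_sub_nhds_zero_iff]
    exact squeeze_zero_norm hdist htend0
  have htsum := hsum.hasSum.tendsto_sum_nat
  exact tendsto_nhds_unique htsum htend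

end Digits3

section Diffs

variable {B : ℕ} {c c' : ℕ → ℤ} {D : ℕ}

lemma tail_eq (hB : 2 ≤ B) (J : ℕ) :
    ∑' i : ℕ, (c (i+J) : ℝ)/(B:ℝ)^(i+J+1) = ((B:ℝ)⁻¹)^J * expand B (fun i => c (i+J)) := by
  have hB0 : (0:ℝ) < B := by positivity
  rw [expand, ← tsum_mul_left]
  apply tsum_congr; intro i
  have hpow : (B:ℝ)^(i+J+1) = (B:ℝ)^J * (B:ℝ)^(i+1) := by rw [← pow_add]; congr 1; omega
  rw [hpow, inv_pow]
  have hBJ : (0:ℝ) < (B:ℝ)^J := by positivity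
  field_simp

lemma expand_diff (hB : 2 ≤ B) (hc : ∀ j, 0 ≤ c j ∧ c j ≤ D) (hc' : ∀ j, 0 ≤ c' j ∧ c' j ≤ D)
    (J : ℕ) (hagree : ∀ i, i < J → c i = c' i) :
    expand B c - expand B c'
      = ((B:ℝ)⁻¹)^J * (expand B (fun i => c (i+J)) - expand B (fun i => c' (i+J))) := by
  have h1 := Summable.sum_add_tsum_nat_add (f := fun j => (c j : ℝ)/(B:ℝ)^(j+1)) J (summable_expand hc hB)
  have h2 := Summable.sum_add_tsum_nat_add (f := fun j => (c' j : ℝ)/(B:ℝ)^(j+1)) J (summable_expand hc' hB)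
  have hpre : ∑ i ∈ Finset.range J, (c i : ℝ)/(B:ℝ)^(i+1)
      = ∑ i ∈ Finset.range J, (c' i : ℝ)/(B:ℝ)^(i+1) := by
    apply Finset.sum_congr rfl
    intro i hi
    rw [hagree i (Finset.mem_range.mp hi)]
  have e1 : expand B c = (∑ i ∈ Finset.range J, (c i : ℝ)/(B:ℝ)^(i+1))
      + ((B:ℝ)⁻¹)^J * expand B (fun i => c (i+J)) := by
    rw [expand, ← h1, tail_eq hB J]
  have e2 : expand B c' = (∑ i ∈ Finset.range J, (c' i : ℝ)/(B:ℝ)^(i+1))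
      + ((B:ℝ)⁻¹)^J * expand B (fun i => c' (i+J)) := by
    rw [expand, ← h2, tail_eq hB J]
  rw [e1, e2, hpre]
  ring

lemma expand_close {M : ℕ} (hM : 2 ≤ M) {c c' : ℕ → ℤ}
    (hc : ∀ j, 0 ≤ c j ∧ c j ≤ (M-1:ℕ)) (hc' : ∀ j, 0 ≤ c' j ∧ c' j ≤ (M-1:ℕ))
    (J : ℕ) (hagree : ∀ i, i < J → c i = c' i) :
    |expand M c - expand M c'| ≤ ((M:ℝ)⁻¹)^J := by
  have hM1 : (1:ℝ) < M := by exact_mod_cast hM.trans_lt' one_lt_two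
  have hcast : ((M-1:ℕ):ℝ) = (M:ℝ) - 1 := by
    push_cast [Nat.cast_sub (by omega : 1 ≤ M)]; ring
  have hone : ((M-1:ℕ):ℝ)/((M:ℝ)-1) = 1 := by
    rw [hcast]; exact div_self (by linarith)
  have hX1 : expand M (fun i => c (i+J)) ≤ 1 := by
    rw [← hone]; exact expand_le (fun i => hc (i+J)) hM
  have hX0 : 0 ≤ expand M (fun i => c (i+J)) := expand_nonneg (fun i => hc (i+J))
  have hY1 : expand M (fun i => c' (i+J)) ≤ 1 := by
    rw [← hone]; exact expand_le (fun i => hc' (i+J)) hM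
  have hY0 : 0 ≤ expand M (fun i => c' (i+J)) := expand_nonneg (fun i => hc' (i+J))
  rw [expand_diff hM hc hc' J hagree, abs_mul, abs_of_nonneg (by positivity)]
  have : |expand M (fun i => c (i+J)) - expand M (fun i => c' (i+J))| ≤ 1 := by
    rw [abs_le]; constructor <;> linarith
  nlinarith [pow_pos (show (0:ℝ) < (M:ℝ)⁻¹ by positivity) J]

lemma expand_split_one (hB : 2 ≤ B) {c : ℕ → ℤ} {D : ℕ} (hc : ∀ j, 0 ≤ c j ∧ c j ≤ D) :
    expand B c = (c 0 : ℝ)/(B:ℝ) + ((B:ℝ)⁻¹) * expand B (fun i => c (i+1)) := by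
  have h1 := Summable.sum_add_tsum_nat_add (f := fun j => (c j : ℝ)/(B:ℝ)^(j+1)) 1 (summable_expand hc hB)
  rw [expand, ← h1, tail_eq hB 1, Finset.sum_range_one, pow_one, pow_one]

lemma expand_sep (hB : 2 ≤ B)
    (hc : ∀ j, 0 ≤ c j ∧ c j ≤ (B-2:ℕ)) (hc' : ∀ j, 0 ≤ c' j ∧ c' j ≤ (B-2:ℕ))
    (J : ℕ) (hagree : ∀ i, i < J → c i = c' i) (hne : c J ≠ c' J) :
    ((B:ℝ)⁻¹)^(J+1) / ((B:ℝ) - 1) ≤ |expand B c - expand B c'| := by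
  have hB1 : (1:ℝ) < B := by exact_mod_cast hB.trans_lt' one_lt_two
  have hB0 : (0:ℝ) < B := by positivity
  have hcast : ((B-2:ℕ):ℝ) = (B:ℝ) - 2 := by
    push_cast [Nat.cast_sub hB]; ring
  rw [expand_diff hB hc hc' J hagree]
  set X := expand B (fun i => c (i+J)) with hX
  set Y := expand B (fun i => c' (i+J)) with hY
  have hcX : ∀ j, 0 ≤ c (j+J) ∧ c (j+J) ≤ (B-2:ℕ) := fun j => hc (j+J)
  have hcY : ∀ j, 0 ≤ c' (j+J) ∧ c' (j+J) ≤ (B-2:ℕ) := fun j => hc' (j+J)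
  have eX := expand_split_one hB hcX
  have eY := expand_split_one hB hcY
  set X1 := expand B (fun i => c (i+1+J)) with hX1d
  set Y1 := expand B (fun i => c' (i+1+J)) with hY1d
  have hX1b : X1 ≤ ((B:ℝ)-2)/((B:ℝ)-1) := by
    rw [← hcast]; exact expand_le (fun i => hc (i+1+J)) hB
  have hX10 : 0 ≤ X1 := expand_nonneg (fun i => hc (i+1+J))
  have hY1b : Y1 ≤ ((B:ℝ)-2)/((B:ℝ)-1) := by
    rw [← hcast]; exact expand_le (fun i => hc' (i+1+J)) hB
  have hY10 : 0 ≤ Y1 := expand_nonneg (fun i => hc' (i+1+J))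
  have hd1 : (1:ℝ) ≤ |(c J : ℝ) - (c' J : ℝ)| := by
    have h0 : c J - c' J ≠ 0 := sub_ne_zero.mpr hne
    have h1 : (1:ℤ) ≤ |c J - c' J| := Int.one_le_abs h0
    have h2 : ((|c J - c' J| : ℤ) : ℝ) = |(c J : ℝ) - (c' J : ℝ)| := by
      push_cast
      rfl
    calc (1:ℝ) ≤ ((|c J - c' J| : ℤ) : ℝ) := by exact_mod_cast h1
      _ = _ := h2
  have hXY : ((B:ℝ)⁻¹) / ((B:ℝ) - 1) ≤ |X - Y| := by
    have hx1y1 : |X1 - Y1| ≤ ((B:ℝ)-2)/((B:ℝ)-1) := by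
      rw [abs_le]; constructor <;> linarith
    have hdecomp : X - Y = ((c J : ℝ) - (c' J : ℝ))/(B:ℝ) + ((B:ℝ)⁻¹) * (X1 - Y1) := by
      simp only [Nat.zero_add] at eX eY
      rw [hX, hY, eX, eY]; ring
    have habs : |X - Y| ≥ |(c J : ℝ) - (c' J : ℝ)|/(B:ℝ) - ((B:ℝ)⁻¹) * |X1 - Y1| := by
      rw [hdecomp]
      have h4 : |((c J : ℝ) - (c' J : ℝ))/(B:ℝ)| = |(c J : ℝ) - (c' J : ℝ)|/(B:ℝ) := by
        rw [abs_div, abs_of_pos hB0]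
      have h5 : |((B:ℝ)⁻¹) * (X1 - Y1)| = ((B:ℝ)⁻¹) * |X1 - Y1| := by
        rw [abs_mul, abs_of_pos (by positivity : (0:ℝ) < (B:ℝ)⁻¹)]
      calc |((c J:ℝ) - (c' J:ℝ))/(B:ℝ) + ((B:ℝ)⁻¹) * (X1 - Y1)|
          ≥ |((c J:ℝ) - (c' J:ℝ))/(B:ℝ) + ((B:ℝ)⁻¹) * (X1 - Y1) + -(((B:ℝ)⁻¹) * (X1 - Y1))|
            - |-(((B:ℝ)⁻¹) * (X1 - Y1))| := by
              have := abs_add_le (((c J:ℝ) - (c' J:ℝ))/(B:ℝ) + ((B:ℝ)⁻¹) * (X1 - Y1))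
                (-(((B:ℝ)⁻¹) * (X1 - Y1)))
              linarith
        _ = |((c J:ℝ) - (c' J:ℝ))/(B:ℝ)| - |((B:ℝ)⁻¹) * (X1 - Y1)| := by
              rw [abs_neg]; congr 2; ring
        _ = |(c J:ℝ) - (c' J:ℝ)|/(B:ℝ) - ((B:ℝ)⁻¹) * |X1 - Y1| := by rw [h4, h5]
    have hBm1 : (0:ℝ) < (B:ℝ) - 1 := by linarith
    have hkey : |(c J : ℝ) - (c' J : ℝ)|/(B:ℝ) - ((B:ℝ)⁻¹) * |X1 - Y1|
        ≥ ((B:ℝ)⁻¹) / ((B:ℝ) - 1) := by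
      have h6 : |(c J : ℝ) - (c' J : ℝ)|/(B:ℝ) ≥ 1/(B:ℝ) := by
        gcongr
      have h7 : ((B:ℝ)⁻¹) * |X1 - Y1| ≤ ((B:ℝ)⁻¹) * (((B:ℝ)-2)/((B:ℝ)-1)) := by
        apply mul_le_mul_of_nonneg_left hx1y1 (by positivity)
      have h8 : 1/(B:ℝ) - ((B:ℝ)⁻¹) * (((B:ℝ)-2)/((B:ℝ)-1)) = ((B:ℝ)⁻¹) / ((B:ℝ) - 1) := by
        field_simp
        ring
      linarith
    linarith
  rw [abs_mul, abs_of_nonneg (by positivity : (0:ℝ) ≤ ((B:ℝ)⁻¹)^J)]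
  have hpow : ((B:ℝ)⁻¹)^(J+1) / ((B:ℝ) - 1) = ((B:ℝ)⁻¹)^J * (((B:ℝ)⁻¹) / ((B:ℝ) - 1)) := by
    rw [pow_succ]; ring
  rw [hpow]
  apply mul_le_mul_of_nonneg_left hXY (by positivity)

end Diffs

end Digits

lemma tmap_iterate (b : ℕ) (x : ℝ) (hx : x ∈ Set.Ico (0:ℝ) 1) (n : ℕ) :
    (Tmap b)^[n] x = Int.fract ((b:ℝ)^n * x) := by
  induction n with
  | zero => simp [Int.fract_eq_self.mpr ⟨hx.1, hx.2⟩]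
  | succ n ih =>
    rw [Function.iterate_succ_apply', ih, Tmap]
    have h1 : (b:ℝ) * Int.fract ((b:ℝ)^n * x)
        = (b:ℝ)^(n+1) * x - (((b:ℤ)*⌊(b:ℝ)^n * x⌋ : ℤ) : ℝ) := by
      rw [Int.fract]; push_cast; ring
    rw [h1, Int.fract_sub_intCast]

lemma jd_bounds (l n : ℕ) (hl : 1 ≤ l) :
    n ≤ ((n+l-1)/l)*l ∧ ((n+l-1)/l)*l ≤ n + l := by
  constructor
  · rcases Nat.eq_zero_or_pos n with h | h
    · simp [h]
    · have h1 : n + l - 1 < (n+l-1)/l * l + l := Nat.lt_div_mul_add (by omega)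
      have h2 : n + l - 1 + 1 = n + l := by omega
      omega
  · have := Nat.div_mul_le_self (n+l-1) l
    omega

lemma avoid_lemma (b l : ℕ) (hb : 3 ≤ b) (hl : 1 ≤ l) (yn rn : ℝ) (hrn : 0 < rn)
    (hsmall : 2 * rn * (b:ℝ)^(2*l) ≤ 1) (n : ℕ) (x : ℝ) (hx : x ∈ Set.Ico (0:ℝ) 1)
    (hmem : (Tmap b)^[n] x ∈ Metric.ball yn rn) :
    dig (b^l) x ((n + l - 1)/l)
        = (⌊(b:ℝ)^(2*l) * (yn - rn)⌋ / (b:ℤ)^(l - (((n + l - 1)/l)*l - n))) % (b:ℤ)^l ∨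
    dig (b^l) x ((n + l - 1)/l)
        = ((⌊(b:ℝ)^(2*l) * (yn - rn)⌋ + 1) / (b:ℤ)^(l - (((n + l - 1)/l)*l - n))) % (b:ℤ)^l := by
  have hb0 : (0:ℝ) < b := by positivity
  obtain ⟨hjl1, hjl2⟩ := jd_bounds l n hl
  set j := (n + l - 1)/l with hj
  set e := j*l - n with he
  have hel : e ≤ l := by omega
  have hne : n + (l + e) = j*l + l := by omega
  set z := Int.fract ((b:ℝ)^n * x) with hz
  have hzT : (Tmap b)^[n] x = z := tmap_iterate b x hx n
  rw [hzT, Metric.mem_ball, Real.dist_eq, abs_lt] at hmem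
  set v := ⌊(b:ℝ)^(2*l) * (yn - rn)⌋ with hv
  set w := ⌊(b:ℝ)^(2*l) * z⌋ with hw
  have hp2l : (0:ℝ) < (b:ℝ)^(2*l) := by positivity
  have hvw : v ≤ w := by
    apply Int.floor_le_floor
    have : yn - rn ≤ z := by linarith [hmem.1, hmem.2]
    nlinarith
  have hwv : w ≤ v + 1 := by
    have hle : (b:ℝ)^(2*l) * z ≤ (b:ℝ)^(2*l) * (yn - rn) + 1 := by
      have hz2 : z ≤ yn - rn + 2*rn := by linarith [hmem.2]
      nlinarith
    calc w ≤ ⌊(b:ℝ)^(2*l) * (yn - rn) + 1⌋ := Int.floor_le_floor hle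
      _ = v + 1 := by rw [Int.floor_add_one]
  -- identity: w / b^(l-e) % b^l = dig (b^l) x j
  have hkey : w / (b:ℤ)^(l-e) % (b:ℤ)^l = dig (b^l) x j := by
    have h1 : w / (b:ℤ)^(l-e) = ⌊(b:ℝ)^(l+e) * z⌋ := by
      have hdiv := floor_div_nat_int ((b:ℝ)^(2*l) * z) (b^(l-e)) (by positivity)
      have hc1 : ((b^(l-e) : ℕ) : ℝ) = (b:ℝ)^(l-e) := by push_cast; ring
      have hc2 : ((b^(l-e) : ℕ) : ℤ) = (b:ℤ)^(l-e) := by push_cast; ring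
      rw [hc1, hc2] at hdiv
      rw [← hdiv]
      congr 1
      have : (b:ℝ)^(2*l) = (b:ℝ)^(l+e) * (b:ℝ)^(l-e) := by
        rw [← pow_add]; congr 1; omega
      rw [this]
      field_simp
    have h2 : ⌊(b:ℝ)^(l+e) * z⌋
        = ⌊(b:ℝ)^((j*l + l)) * x⌋ - (b:ℤ)^(l+e) * ⌊(b:ℝ)^n * x⌋ := by
      have hzx : (b:ℝ)^(l+e) * z
          = (b:ℝ)^((j*l + l)) * x - (((b:ℤ)^(l+e) * ⌊(b:ℝ)^n * x⌋ : ℤ) : ℝ) := by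
        rw [hz, Int.fract]
        have : (b:ℝ)^(l+e) * (b:ℝ)^n = (b:ℝ)^((j*l + l)) := by
          rw [← pow_add]; congr 1; omega
        push_cast
        linear_combination x * this
      rw [hzx, Int.floor_sub_intCast]
    have h3 : ((b:ℤ)^(l+e) * ⌊(b:ℝ)^n * x⌋) % (b:ℤ)^l = 0 := by
      have : (b:ℤ)^(l+e) = (b:ℤ)^l * (b:ℤ)^e := by rw [← pow_add]
      rw [this, mul_assoc, Int.mul_emod_right]
    have h4 : dig (b^l) x j = ⌊(b:ℝ)^((j*l + l)) * x⌋ % (b:ℤ)^l := by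
      unfold dig
      have hc1 : (((b^l : ℕ)):ℝ)^(j+1) = (b:ℝ)^((j*l + l)) := by
        push_cast
        rw [← pow_mul]
        congr 1
        ring
      have hc2 : ((b^l : ℕ) : ℤ) = (b:ℤ)^l := by push_cast; ring
      rw [hc1, hc2]
    rw [h1, h2, h4, Int.sub_emod, h3, sub_zero, Int.emod_emod_of_dvd _ dvd_rfl]
  have hcase : w = v ∨ w = v + 1 := by omega
  rcases hcase with h | h
  · left; rw [← hkey, h]
  · right; rw [← hkey, h]

section Main

variable (b l N : ℕ) (y r : ℕ → ℝ)

noncomputable def dval (n : ℕ) (k : ℤ) : ℤ :=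
  (⌊(b:ℝ)^(2*l) * (y n - r n)⌋ + k) / (b:ℤ)^(l - (((n + l - 1)/l)*l - n)) % (b:ℤ)^l

noncomputable def Fbad (j : ℕ) : Finset ℤ :=
  ((Finset.Icc (j*l - l) (j*l)).filter (fun n => N ≤ n)).biUnion
    (fun n => {dval b l y r n 0, dval b l y r n 1})

noncomputable def Aok (j : ℕ) : Finset ℤ :=
  (Finset.Icc 0 ((b:ℤ)^l - 2)) \ Fbad b l N y r j

lemma arith_aux (hb : 3 ≤ b) (hl : 3 ≤ l) : b^(l-1) + (2*l + 3) ≤ b^l := by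
  have e12 : b^(l-1)*3 ≤ b^l := by
    calc b^(l-1)*3 ≤ b^(l-1)*b := Nat.mul_le_mul_left _ hb
      _ = b^l := by rw [← pow_succ]; congr 1; omega
  have e3 : 3^(l-1) ≤ b^(l-1) := Nat.pow_le_pow_left hb _
  have e4 : 3^(l-1) = 9 * 3^(l-3) := by
    have h : l - 1 = (l-3)+2 := by omega
    rw [h, pow_add]; ring
  have e5 : l - 3 < 3^(l-3) := Nat.lt_pow_self (by norm_num)
  omega

lemma Aok_card (hb : 3 ≤ b) (hl : 3 ≤ l) (j : ℕ) : b^(l-1) ≤ (Aok b l N y r j).card := by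
  have h1 : (Fbad b l N y r j).card ≤ 2*(l+1) := by
    apply le_trans (Finset.card_biUnion_le)
    calc ∑ n ∈ (Finset.Icc (j*l - l) (j*l)).filter (fun n => N ≤ n),
          ({dval b l y r n 0, dval b l y r n 1} : Finset ℤ).card
        ≤ ∑ n ∈ (Finset.Icc (j*l - l) (j*l)).filter (fun n => N ≤ n), 2 := by
          apply Finset.sum_le_sum
          intro n _
          apply le_trans (Finset.card_insert_le _ _)
          simp
      _ = ((Finset.Icc (j*l - l) (j*l)).filter (fun n => N ≤ n)).card * 2 := by
          rw [Finset.sum_const, smul_eq_mul]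
      _ ≤ (l+1) * 2 := by
          apply Nat.mul_le_mul_right
          apply le_trans (Finset.card_filter_le _ _)
          rw [Nat.card_Icc]
          omega
      _ = 2*(l+1) := by ring
  have h2 : (Finset.Icc (0:ℤ) ((b:ℤ)^l - 2)).card = b^l - 1 := by
    rw [Int.card_Icc]
    have hbl : (3:ℤ)^l ≤ (b:ℤ)^l := by
      apply pow_le_pow_left₀ (by norm_num)
      exact_mod_cast hb
    have h3l : (3:ℤ) ≤ (3:ℤ)^l := by
      calc (3:ℤ) = 3^1 := (pow_one 3).symm
        _ ≤ 3^l := pow_le_pow_right₀ (by norm_num) (by omega)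
    have : ((b:ℤ)^l - 2 + 1 - 0) = ((b^l - 1 : ℕ) : ℤ) := by
      rw [Nat.cast_sub (Nat.one_le_pow _ _ (by omega))]
      push_cast
      ring
    rw [this, Int.toNat_natCast]
  have h3 := Finset.le_card_sdiff (Fbad b l N y r j) (Finset.Icc (0:ℤ) ((b:ℤ)^l - 2))
  rw [h2] at h3
  have h4 := arith_aux b l hb hl
  unfold Aok
  omega

lemma dval_mem_Fbad (hl : 1 ≤ l) (n : ℕ) (hn : N ≤ n) (k : ℤ) (hk : k = 0 ∨ k = 1) :
    dval b l y r n k ∈ Fbad b l N y r ((n+l-1)/l) := by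
  unfold Fbad
  rw [Finset.mem_biUnion]
  refine ⟨n, ?_, ?_⟩
  · rw [Finset.mem_filter, Finset.mem_Icc]
    obtain ⟨h1, h2⟩ := jd_bounds l n hl
    exact ⟨⟨by omega, h1⟩, hn⟩
  · rcases hk with h | h <;> subst h <;> simp

noncomputable def glist (j : ℕ) : List ℤ := (Aok b l N y r j).sort (· ≤ ·)

noncomputable def gfun (j i : ℕ) : ℤ := (glist b l N y r j).getD i 0

noncomputable def hfun (j : ℕ) (t : ℤ) : ℕ := min ((glist b l N y r j).idxOf t) (b^(l-1) - 1)

noncomputable def fmap (x : ℝ) : ℝ :=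
  expand (b^(l-1)) (fun j => (hfun b l N y r j (dig (b^l) x j) : ℤ))

def allowed : Set (ℕ → ℤ) := {c | ∀ j, c j ∈ Aok b l N y r j}

noncomputable def Cs : Set ℝ := expand (b^l) '' allowed b l N y r

lemma Aok_sub (hb : 3 ≤ b) (hl : 3 ≤ l) {j : ℕ} {a : ℤ} (ha : a ∈ Aok b l N y r j) :
    0 ≤ a ∧ a ≤ ((b^l - 2 : ℕ) : ℤ) := by
  rw [Aok, Finset.mem_sdiff, Finset.mem_Icc] at ha
  have hcast : ((b^l - 2 : ℕ) : ℤ) = (b:ℤ)^l - 2 := by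
    have h2 : 1 < b^l := Nat.one_lt_pow (by omega) (by omega)
    rw [Nat.cast_sub (by omega)]
    push_cast
    ring
  rw [hcast]
  exact ⟨ha.1.1, ha.1.2⟩

lemma gfun_mem (hb : 3 ≤ b) (hl : 3 ≤ l) (j i : ℕ) (hi : i < b^(l-1)) :
    gfun b l N y r j i ∈ Aok b l N y r j := by
  have hlen : (glist b l N y r j).length = (Aok b l N y r j).card := Finset.length_sort _
  have hi' : i < (glist b l N y r j).length := by
    rw [hlen]; exact lt_of_lt_of_le hi (Aok_card b l N y r hb hl j)
  rw [gfun, List.getD_eq_getElem _ _ hi']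
  have hmem := List.getElem_mem hi'
  unfold glist at hmem
  rwa [Finset.mem_sort] at hmem

lemma hfun_gfun (hb : 3 ≤ b) (hl : 3 ≤ l) (j i : ℕ) (hi : i < b^(l-1)) :
    hfun b l N y r j (gfun b l N y r j i) = i := by
  have hlen : (glist b l N y r j).length = (Aok b l N y r j).card := Finset.length_sort _
  have hi' : i < (glist b l N y r j).length := by
    rw [hlen]; exact lt_of_lt_of_le hi (Aok_card b l N y r hb hl j)
  have hnd : (glist b l N y r j).Nodup := Finset.sort_nodup _ _
  rw [hfun, gfun, List.getD_eq_getElem _ _ hi', List.Nodup.idxOf_getElem hnd i hi']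
  omega

lemma hfun_bounds (hb : 3 ≤ b) (hl : 3 ≤ l) (j : ℕ) (t : ℤ) :
    0 ≤ ((hfun b l N y r j t : ℕ) : ℤ) ∧ ((hfun b l N y r j t : ℕ) : ℤ) ≤ ((b^(l-1) - 1 : ℕ) : ℤ) := by
  constructor
  · positivity
  · have : hfun b l N y r j t ≤ b^(l-1) - 1 := min_le_right _ _
    exact_mod_cast this

theorem dim_lower (hb : 3 ≤ b) (hl : 3 ≤ l)
    (hrpos : ∀ n, 0 < r n)
    (hN : ∀ n, N ≤ n → 2 * r n * (b:ℝ)^(2*l) ≤ 1) :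
    ((((l:ℝ≥0) - 1)/l : ℝ≥0) : ℝ≥0∞) ≤ dimH {x : ℝ | x ∈ Set.Ico (0:ℝ) 1 ∧
      ∀ n, N ≤ n → (Tmap b)^[n] x ∉ Metric.ball (y n) (r n)} := by
  have hB2 : 2 ≤ b^l := Nat.one_lt_pow (by omega) (by omega)
  have hM2 : 2 ≤ b^(l-1) := Nat.one_lt_pow (by omega) (by omega)
  have hbR : (1:ℝ) < b := by exact_mod_cast (by omega : 1 < b)
  have hb0 : (0:ℝ) < b := by linarith
  have hlR : (3:ℝ) ≤ l := by exact_mod_cast hl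
  set rr : ℝ≥0 := ((l:ℝ≥0) - 1)/l with hrr
  have hrrc : (rr:ℝ) = ((l:ℝ) - 1)/(l:ℝ) := by
    rw [hrr, NNReal.coe_div, NNReal.coe_sub (by exact_mod_cast (by omega : 1 ≤ l))]
    norm_num
  have hrrpos : 0 < rr := by
    rw [← NNReal.coe_pos, hrrc]
    apply div_pos <;> linarith
  have hrle1 : (rr:ℝ) ≤ 1 := by
    rw [hrrc, div_le_one (by linarith)]; linarith
  have hcb_of : ∀ c ∈ allowed b l N y r, ∀ j, 0 ≤ c j ∧ c j ≤ ((b^l - 2:ℕ):ℤ) :=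
    fun c hc j => Aok_sub b l N y r hb hl (hc j)
  -- (a) the Cantor set avoids the targets
  have hCsub : Cs b l N y r ⊆ {x : ℝ | x ∈ Set.Ico (0:ℝ) 1 ∧
      ∀ n, N ≤ n → (Tmap b)^[n] x ∉ Metric.ball (y n) (r n)} := by
    rintro x ⟨c, hc, rfl⟩
    have hcb := hcb_of c hc
    have hx : expand (b^l) c ∈ Set.Ico (0:ℝ) 1 :=
      ⟨expand_nonneg hcb, expand_lt_one hB2 hcb⟩
    refine ⟨hx, fun n hn hmem => ?_⟩
    have hav := avoid_lemma b l hb (by omega) (y n) (r n) (hrpos n) (hN n hn) n _ hx hmem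
    have hjd : dig (b^l) (expand (b^l) c) ((n + l - 1)/l) = c ((n + l - 1)/l) :=
      dig_expand hB2 hcb _
    have hA := hc ((n+l-1)/l)
    rw [Aok, Finset.mem_sdiff] at hA
    apply hA.2
    have h0 : dval b l y r n 0 = ⌊(b:ℝ)^(2*l) * (y n - r n)⌋
        / (b:ℤ)^(l - (((n + l - 1)/l)*l - n)) % (b:ℤ)^l := by
      rw [dval, add_zero]
    have h1 : dval b l y r n 1 = (⌊(b:ℝ)^(2*l) * (y n - r n)⌋ + 1)
        / (b:ℤ)^(l - (((n + l - 1)/l)*l - n)) % (b:ℤ)^l := rfl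
    rcases hav with h | h
    · rw [hjd] at h
      rw [h, ← h0]
      exact dval_mem_Fbad b l N y r (by omega) n hn 0 (Or.inl rfl)
    · rw [hjd] at h
      rw [h, ← h1]
      exact dval_mem_Fbad b l N y r (by omega) n hn 1 (Or.inr rfl)
  -- casts
  have hBr : ((b^l : ℕ):ℝ) = (b:ℝ)^l := by push_cast; ring
  have hMr : ((b^(l-1) : ℕ):ℝ) = (b:ℝ)^(l-1) := by push_cast; ring
  have hBgt1 : (1:ℝ) < ((b^l : ℕ):ℝ) := by exact_mod_cast hB2.trans_lt' one_lt_two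
  have hMgt1 : (1:ℝ) < ((b^(l-1) : ℕ):ℝ) := by exact_mod_cast hM2.trans_lt' one_lt_two
  have hBge2 : (2:ℝ) ≤ ((b^l : ℕ):ℝ) := by exact_mod_cast hB2
  have hMge2 : (2:ℝ) ≤ ((b^(l-1) : ℕ):ℝ) := by exact_mod_cast hM2
  -- rpow key computation
  have hrpow : ∀ j₀ : ℕ, ((((b^l:ℕ):ℝ)⁻¹)^(j₀+1))^(rr:ℝ) = (((b^(l-1):ℕ):ℝ)⁻¹)^(j₀+1) := by
    intro j₀
    have e1 : (((b^l:ℕ):ℝ)⁻¹)^(j₀+1) = (b:ℝ) ^ (-((l*(j₀+1) : ℕ) : ℝ)) := by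
      rw [hBr, ← inv_pow, ← pow_mul]
      rw [← Real.rpow_natCast ((b:ℝ)⁻¹) (l*(j₀+1)), Real.inv_rpow hb0.le,
        ← Real.rpow_neg hb0.le]
    have e2 : (((b^(l-1):ℕ):ℝ)⁻¹)^(j₀+1) = (b:ℝ) ^ (-(((l-1)*(j₀+1) : ℕ) : ℝ)) := by
      rw [hMr, ← inv_pow, ← pow_mul]
      rw [← Real.rpow_natCast ((b:ℝ)⁻¹) ((l-1)*(j₀+1)), Real.inv_rpow hb0.le,
        ← Real.rpow_neg hb0.le]
    rw [e1, e2, ← Real.rpow_mul hb0.le]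
    congr 1
    rw [hrrc]
    have hc1 : ((l*(j₀+1) : ℕ) : ℝ) = (l:ℝ)*((j₀:ℝ)+1) := by push_cast; ring
    have hc2 : (((l-1)*(j₀+1) : ℕ) : ℝ) = ((l:ℝ)-1)*((j₀:ℝ)+1) := by
      push_cast [Nat.cast_sub (by omega : 1 ≤ l)]; ring
    rw [hc1, hc2]
    field_simp
  -- (b) Hölder continuity on the Cantor set
  have hHold : HolderOnWith ((b^(l-1) : ℝ≥0) * (b^l : ℝ≥0)) rr (fmap b l N y r)
      (Cs b l N y r) := by
    rintro x ⟨c, hc, rfl⟩ x' ⟨c', hc', rfl⟩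
    have hcb := hcb_of c hc
    have hcb' := hcb_of c' hc'
    by_cases hcc : ∀ j, c j = c' j
    · have hxx : expand (b^l) c = expand (b^l) c' := by
        unfold expand
        exact tsum_congr (fun j => by rw [hcc j])
      rw [hxx, edist_self]
      exact zero_le
    · push_neg at hcc
      set j₀ := Nat.find hcc with hj₀
      have hne : c j₀ ≠ c' j₀ := Nat.find_spec hcc
      have hagree : ∀ i, i < j₀ → c i = c' i := by
        intro i hi
        by_contra hni
        exact absurd (Nat.find_min hcc hi) (by simpa using hni)
      have hsep := expand_sep hB2 hcb hcb' j₀ hagree hne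
      -- digits of f-values
      have hdigx : ∀ j, dig (b^l) (expand (b^l) c) j = c j := fun j => dig_expand hB2 hcb j
      have hdigx' : ∀ j, dig (b^l) (expand (b^l) c') j = c' j := fun j => dig_expand hB2 hcb' j
      have hfx : fmap b l N y r (expand (b^l) c)
          = expand (b^(l-1)) (fun j => ((hfun b l N y r j (c j) : ℕ):ℤ)) := by
        unfold fmap
        congr 1
        funext j
        rw [hdigx j]
      have hfx' : fmap b l N y r (expand (b^l) c')
          = expand (b^(l-1)) (fun j => ((hfun b l N y r j (c' j) : ℕ):ℤ)) := by
        unfold fmap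
        congr 1
        funext j
        rw [hdigx' j]
      have hclose := expand_close hM2
        (fun j => hfun_bounds b l N y r hb hl j (c j))
        (fun j => hfun_bounds b l N y r hb hl j (c' j))
        j₀ (fun i hi => by rw [hagree i hi])
      -- real inequality
      set dxy := |expand (b^l) c - expand (b^l) c'| with hdxy
      have hdxy0 : 0 < dxy := by
        have := hsep
        have hpos : (0:ℝ) < (((b^l:ℕ):ℝ)⁻¹)^(j₀+1) / (((b^l:ℕ):ℝ) - 1) := by
          apply div_pos (by positivity) (by linarith)
        linarith
      have hrpow0 := hrpow j₀
      have hdpow : (((b^(l-1):ℕ):ℝ)⁻¹)^(j₀+1) / (((b^l:ℕ):ℝ) - 1) ≤ dxy ^ (rr:ℝ) := by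
        have hs0 : (0:ℝ) ≤ (((b^l:ℕ):ℝ)⁻¹)^(j₀+1) / (((b^l:ℕ):ℝ) - 1) := by
          apply div_nonneg (by positivity) (by linarith)
        have h1 : ((((b^l:ℕ):ℝ)⁻¹)^(j₀+1) / (((b^l:ℕ):ℝ) - 1)) ^ (rr:ℝ) ≤ dxy ^ (rr:ℝ) :=
          Real.rpow_le_rpow hs0 hsep (by positivity)
        have h2 : ((((b^l:ℕ):ℝ)⁻¹)^(j₀+1) / (((b^l:ℕ):ℝ) - 1)) ^ (rr:ℝ)
            = ((((b^l:ℕ):ℝ)⁻¹)^(j₀+1))^(rr:ℝ) / (((b^l:ℕ):ℝ) - 1)^(rr:ℝ) :=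
          Real.div_rpow (by positivity) (by linarith) _
        have h3 : (((b^l:ℕ):ℝ) - 1)^(rr:ℝ) ≤ ((b^l:ℕ):ℝ) - 1 := by
          calc (((b^l:ℕ):ℝ) - 1)^(rr:ℝ) ≤ (((b^l:ℕ):ℝ) - 1)^(1:ℝ) :=
              Real.rpow_le_rpow_of_exponent_le (by linarith) hrle1
            _ = ((b^l:ℕ):ℝ) - 1 := Real.rpow_one _
        have h4 : ((((b^l:ℕ):ℝ)⁻¹)^(j₀+1))^(rr:ℝ) / (((b^l:ℕ):ℝ) - 1)
            ≤ ((((b^l:ℕ):ℝ)⁻¹)^(j₀+1))^(rr:ℝ) / (((b^l:ℕ):ℝ) - 1)^(rr:ℝ) := by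
          apply div_le_div_of_nonneg_left (by positivity) _ h3
          apply Real.rpow_pos_of_pos (by linarith)
        rw [hrpow0] at h4
        rw [h2, hrpow0] at h1
        calc (((b^(l-1):ℕ):ℝ)⁻¹)^(j₀+1) / (((b^l:ℕ):ℝ) - 1)
            ≤ (((b^(l-1):ℕ):ℝ)⁻¹)^(j₀+1) / (((b^l:ℕ):ℝ) - 1)^(rr:ℝ) := h4
          _ ≤ dxy ^ (rr:ℝ) := h1
      have hdreal : |fmap b l N y r (expand (b^l) c) - fmap b l N y r (expand (b^l) c')|
          ≤ ((b^(l-1):ℕ):ℝ) * ((b^l:ℕ):ℝ) * dxy ^ (rr:ℝ) := by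
        rw [hfx, hfx']
        calc |expand (b^(l-1)) (fun j => ((hfun b l N y r j (c j) : ℕ):ℤ))
              - expand (b^(l-1)) (fun j => ((hfun b l N y r j (c' j) : ℕ):ℤ))|
            ≤ (((b^(l-1):ℕ):ℝ)⁻¹)^j₀ := hclose
          _ = ((b^(l-1):ℕ):ℝ) * (((b^(l-1):ℕ):ℝ)⁻¹)^(j₀+1) := by
              rw [pow_succ]
              field_simp
          _ ≤ ((b^(l-1):ℕ):ℝ) * ((b^l:ℕ):ℝ) * dxy ^ (rr:ℝ) := by
              have hr1 : (((b^(l-1):ℕ):ℝ)⁻¹)^(j₀+1)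
                  ≤ (((b^l:ℕ):ℝ) - 1) * (dxy ^ (rr:ℝ)) := by
                rw [div_le_iff₀ (by linarith : (0:ℝ) < ((b^l:ℕ):ℝ) - 1)] at hdpow
                linarith
              have hM0 : (0:ℝ) < ((b^(l-1):ℕ):ℝ) := by linarith
              have hB0' : (0:ℝ) < ((b^l:ℕ):ℝ) := by linarith
              have hrp0 : (0:ℝ) ≤ dxy ^ (rr:ℝ) := Real.rpow_nonneg (abs_nonneg _) _
              nlinarith
      -- convert to edist
      rw [edist_dist, edist_dist]
      have hd1 : dist (fmap b l N y r (expand (b^l) c)) (fmap b l N y r (expand (b^l) c'))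
          ≤ ((b^(l-1):ℕ):ℝ) * ((b^l:ℕ):ℝ) * dxy ^ (rr:ℝ) := by
        rw [Real.dist_eq]; exact hdreal
      have hd2 : dist (expand (b^l) c) (expand (b^l) c') = dxy := by
        rw [Real.dist_eq]
      calc ENNReal.ofReal (dist (fmap b l N y r (expand (b^l) c))
              (fmap b l N y r (expand (b^l) c')))
          ≤ ENNReal.ofReal (((b^(l-1):ℕ):ℝ) * ((b^l:ℕ):ℝ) * dxy ^ (rr:ℝ)) :=
            ENNReal.ofReal_le_ofReal hd1
        _ = ENNReal.ofReal (((b^(l-1):ℕ):ℝ) * ((b^l:ℕ):ℝ)) * ENNReal.ofReal (dxy ^ (rr:ℝ)) := by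
            rw [ENNReal.ofReal_mul (by positivity)]
        _ = ((b^(l-1) : ℝ≥0) * (b^l : ℝ≥0) : ℝ≥0∞) * (ENNReal.ofReal (dist (expand (b^l) c)
              (expand (b^l) c'))) ^ (rr:ℝ) := by
            rw [hd2, ← ENNReal.ofReal_rpow_of_nonneg (abs_nonneg _) (by positivity)]
            congr 1
            rw [ENNReal.ofReal_mul (by positivity), ENNReal.ofReal_natCast,
              ENNReal.ofReal_natCast]
            norm_cast
  -- (c) surjectivity onto [0,1)
  have hsurj : Set.Ico (0:ℝ) 1 ⊆ fmap b l N y r '' Cs b l N y r := by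
    intro t ht
    set u : ℕ → ℕ := fun j => (dig (b^(l-1)) t j).toNat with hu
    have hult : ∀ j, u j < b^(l-1) := by
      intro j
      have h1 := dig_lt hM2 t j
      have h2 := dig_nonneg hM2 t j
      show (dig (b^(l-1)) t j).toNat < b^(l-1)
      omega
    set c : ℕ → ℤ := fun j => gfun b l N y r j (u j) with hcdef
    have hcA : ∀ j, c j ∈ Aok b l N y r j := fun j => gfun_mem b l N y r hb hl j (u j) (hult j)
    refine ⟨expand (b^l) c, ⟨c, hcA, rfl⟩, ?_⟩
    have hcb : ∀ j, 0 ≤ c j ∧ c j ≤ ((b^l - 2:ℕ):ℤ) := fun j => Aok_sub b l N y r hb hl (hcA j)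
    have hdigx : ∀ j, dig (b^l) (expand (b^l) c) j = c j := fun j => dig_expand hB2 hcb j
    have hfx : fmap b l N y r (expand (b^l) c)
        = expand (b^(l-1)) (fun j => ((hfun b l N y r j (c j) : ℕ):ℤ)) := by
      unfold fmap
      congr 1
      funext j
      rw [hdigx j]
    rw [hfx]
    have hstep : ∀ j, ((hfun b l N y r j (c j) : ℕ):ℤ) = dig (b^(l-1)) t j := by
      intro j
      have : c j = gfun b l N y r j (u j) := rfl
      rw [this, hfun_gfun b l N y r hb hl j (u j) (hult j)]
      have : u j = (dig (b^(l-1)) t j).toNat := rfl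
      rw [this]
      exact Int.toNat_of_nonneg (dig_nonneg hM2 t j)
    have heq : (fun j => ((hfun b l N y r j (c j) : ℕ):ℤ)) = dig (b^(l-1)) t := funext hstep
    rw [heq]
    exact expand_dig hM2 t ht
  -- assemble
  have h1 : dimH (Set.Ico (0:ℝ) 1) = 1 := by
    rw [Real.dimH_of_nonempty_interior (E := ℝ)]
    · simp
    · rw [interior_Ico]
      exact ⟨1/2, by norm_num⟩
  have h2 : 1 ≤ dimH (fmap b l N y r '' Cs b l N y r) := h1 ▸ dimH_mono hsurj
  have h3 := hHold.dimH_image_le hrrpos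
  have h4 : (rr : ℝ≥0∞) ≤ dimH (Cs b l N y r) := by
    have h5 := le_trans h2 h3
    rw [ENNReal.le_div_iff_mul_le (Or.inl (by exact_mod_cast hrrpos.ne'))
      (Or.inl ENNReal.coe_ne_top)] at h5
    simpa using h5
  exact le_trans h4 (dimH_mono hCsub)

end Main

/-- **Theorem 1.4 (i).** If `diam B_n = 2 r_n → 0`, then the liminf set
`K({B_n}) = {x ∈ [0,1) : T_b^n x ∉ B_n for all but finitely many n}` has full
Hausdorff dimension. -/
theorem dimH_liminf_set_eq_one (b : ℕ) (hb : 3 ≤ b)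
    (y : ℕ → ℝ) (hy : ∀ n, y n ∈ Set.Ico (0 : ℝ) 1)
    (r : ℕ → ℝ) (hr : ∀ n, 0 < r n)
    (hr0 : Filter.Tendsto r Filter.atTop (nhds 0)) :
    dimH { x : ℝ | x ∈ Set.Ico (0 : ℝ) 1 ∧
        ∀ᶠ n in Filter.atTop, (Tmap b)^[n] x ∉ Metric.ball (y n) (r n) } = 1 := by
  have hb0 : (0:ℝ) < b := by positivity
  apply le_antisymm
  · calc dimH { x : ℝ | x ∈ Set.Ico (0 : ℝ) 1 ∧
        ∀ᶠ n in Filter.atTop, (Tmap b)^[n] x ∉ Metric.ball (y n) (r n) }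
        ≤ dimH (Set.univ : Set ℝ) := dimH_mono (Set.subset_univ _)
      _ = 1 := Real.dimH_univ
  · have key : ∀ l : ℕ, 3 ≤ l → ((((l:ℝ≥0) - 1)/l : ℝ≥0) : ℝ≥0∞)
        ≤ dimH { x : ℝ | x ∈ Set.Ico (0 : ℝ) 1 ∧
          ∀ᶠ n in Filter.atTop, (Tmap b)^[n] x ∉ Metric.ball (y n) (r n) } := by
      intro l hl
      have hε : (0:ℝ) < ((b:ℝ)^(2*l))⁻¹ / 2 := by positivity
      have hev : ∀ᶠ n in atTop, r n < ((b:ℝ)^(2*l))⁻¹ / 2 := hr0.eventually (gt_mem_nhds hε)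
      obtain ⟨N, hN⟩ := eventually_atTop.mp hev
      have hN' : ∀ n, N ≤ n → 2 * r n * (b:ℝ)^(2*l) ≤ 1 := by
        intro n hn
        have h1 := hN n hn
        have h2 : (0:ℝ) < (b:ℝ)^(2*l) := by positivity
        have h3 : ((b:ℝ)^(2*l))⁻¹ * (b:ℝ)^(2*l) = 1 := inv_mul_cancel₀ (ne_of_gt h2)
        nlinarith
      have hlow := dim_lower b l N y r hb hl hr hN'
      refine le_trans hlow (dimH_mono ?_)
      intro x hx
      exact ⟨hx.1, eventually_atTop.mpr ⟨N, hx.2⟩⟩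
    apply ENNReal.le_of_forall_pos_le_add
    intro ε hε _
    obtain ⟨l₀, hl₀⟩ := exists_nat_gt (1/(ε:ℝ))
    set l := max 3 l₀ with hldef
    have hl3 : 3 ≤ l := le_max_left _ _
    have hlR : (0:ℝ) < l := by
      have : (3:ℝ) ≤ l := by exact_mod_cast hl3
      linarith
    have hinv : 1/(l:ℝ) < ε := by
      have h1 : (l₀:ℝ) ≤ l := by exact_mod_cast le_max_right 3 l₀
      have h2 : 1/(ε:ℝ) < l := lt_of_lt_of_le hl₀ h1
      have hεR : (0:ℝ) < ε := hε
      rw [div_lt_iff₀ hlR]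
      rw [div_lt_iff₀ hεR] at h2
      have hcomm := mul_comm (ε:ℝ) (l:ℝ)
      linarith
    have hrr1 : (1:ℝ≥0) ≤ ((l:ℝ≥0) - 1)/l + ε := by
      rw [← NNReal.coe_le_coe]
      push_cast
      rw [NNReal.coe_sub (by exact_mod_cast (by omega : 1 ≤ l))]
      push_cast
      have : ((l:ℝ) - 1)/l = 1 - 1/(l:ℝ) := by field_simp
      rw [this]
      linarith
    calc (1:ℝ≥0∞) = ((1:ℝ≥0):ℝ≥0∞) := by norm_cast
      _ ≤ ((((l:ℝ≥0) - 1)/l + ε : ℝ≥0) : ℝ≥0∞) := by exact_mod_cast hrr1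
      _ = ((((l:ℝ≥0) - 1)/l : ℝ≥0) : ℝ≥0∞) + (ε:ℝ≥0∞) := by rw [ENNReal.coe_add]
      _ ≤ dimH { x : ℝ | x ∈ Set.Ico (0 : ℝ) 1 ∧
          ∀ᶠ n in Filter.atTop, (Tmap b)^[n] x ∉ Metric.ball (y n) (r n) } + (ε:ℝ≥0∞) :=
        add_le_add_left (key l hl3) _

end Paper
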